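/- Let (x_n^1),...,(x_n^l) be bounded sequences in a Banach space X and (δ_n) a decreasing null sequence of positive reals. Then for every infinite M ⊂ ℕ there exists an infinite L ⊂ M such that for every k ∈ ℕ, all scalars (a_{ij}) in [−1,1]^{l×k}, and all strict plegma families (s_i)_{i=1}^l, (t_i)_{i=1}^l in [L]^k with s_1(1) ≥ L(k) and t_1(1) ≥ L(k), one has |‖Σ_{j=1}^k Σ_{i=1}^l a_{ij} x^i_{s_i(j)}‖ − ‖Σ_{j=1}^k Σ_{i=1}^l a_{ij} x^i_{t_i(j)}‖| < δ_k. -/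

import Mathlib

open Filter

/-- A strict plegma family `(s i)_{i < l}` in `[ℕ]^k`. -/
def IsStrictPlegma (l k : ℕ) (s : Fin l → Fin k → ℕ) : Prop :=
  (∀ (i₁ i₂ : Fin l) (j₁ j₂ : Fin k), j₁ < j₂ → s i₁ j₁ < s i₂ j₂) ∧
  (∀ i₁ i₂ : Fin l, i₁ < i₂ → ∀ j : Fin k, s i₁ j < s i₂ j)


/-- Infinite Ramsey theorem: any finite coloring of strictly increasing `n`-tuples from an
infinite set `S ⊆ ℕ` admits an infinite homogeneous subset. -/
theorem ramsey_infinite (n : ℕ) {κ : Type} [Finite κ] (c : (Fin n → ℕ) → κ)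
    {S : Set ℕ} (hS : S.Infinite) :
    ∃ T : Set ℕ, T ⊆ S ∧ T.Infinite ∧ ∃ k : κ,
      ∀ u : Fin n → ℕ, StrictMono u → (∀ i, u i ∈ T) → c u = k := by
  induction n generalizing S with
  | zero =>
    refine ⟨S, Set.Subset.rfl, hS, c (fun i => i.elim0), fun u _ _ => ?_⟩
    congr 1; funext i; exact i.elim0
  | succ n IH =>
    -- step: from an infinite set produce a point, an infinite subset above it, and a color
    have step : ∀ (S' : Set ℕ), S'.Infinite →
        ∃ p : ℕ × {T : Set ℕ // T.Infinite} × κ, p.1 ∈ S' ∧ ↑p.2.1 ⊆ S' ∧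
          (∀ b ∈ (p.2.1 : Set ℕ), p.1 < b) ∧
          ∀ u : Fin n → ℕ, StrictMono u → (∀ i, u i ∈ (p.2.1 : Set ℕ)) →
            c (Fin.cons p.1 u) = p.2.2 := by
      intro S' hS'
      obtain ⟨a, ha⟩ := hS'.nonempty
      have h2 : ({b ∈ S' | a < b}).Infinite := by
        have : S' \ {b | b ≤ a} ⊆ {b ∈ S' | a < b} := by
          intro b hb; exact ⟨hb.1, by simpa using hb.2⟩
        exact ((hS'.diff (Set.finite_le_nat a)).mono this)
      obtain ⟨T, hTsub, hTinf, k, hk⟩ := IH (fun u => c (Fin.cons a u)) h2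
      exact ⟨⟨a, ⟨T, hTinf⟩, k⟩, ha, fun b hb => (hTsub hb).1,
        fun b hb => (hTsub hb).2, hk⟩
    classical
    let F : {T : Set ℕ // T.Infinite} → ℕ × {T : Set ℕ // T.Infinite} × κ :=
      fun S' => (step S' S'.2).choose
    let seq : ℕ → ℕ × {T : Set ℕ // T.Infinite} × κ :=
      fun n => Nat.rec (F ⟨S, hS⟩) (fun _ p => F p.2.1) n
    set A : ℕ → ℕ := fun n => (seq n).1 with hA
    set T : ℕ → Set ℕ := fun n => ((seq n).2.1 : Set ℕ) with hT
    set col : ℕ → κ := fun n => (seq n).2.2 with hcol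
    have spec : ∀ m : ℕ, A m ∈ (if m = 0 then S else T (m-1)) ∧
        T m ⊆ (if m = 0 then S else T (m-1)) ∧ (∀ b ∈ T m, A m < b) ∧
        ∀ u : Fin n → ℕ, StrictMono u → (∀ i, u i ∈ T m) → c (Fin.cons (A m) u) = col m := by
      intro m
      cases m with
      | zero =>
        have h := (step (⟨S, hS⟩ : {T : Set ℕ // T.Infinite}) hS).choose_spec
        exact h
      | succ m =>
        have h := (step (seq m).2.1 (seq m).2.1.2).choose_spec
        exact h
    have hchain : ∀ m n : ℕ, m ≤ n → T n ⊆ T m := by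
      intro m n h
      induction n with
      | zero => simpa [Nat.le_zero.mp h]
      | succ n IH2 =>
        rcases Nat.lt_or_ge m (n+1) with h'|h'
        · have := (spec (n+1)).2.1
          simp only [Nat.add_sub_cancel, if_neg (Nat.succ_ne_zero n)] at this
          exact (this.trans (IH2 (Nat.lt_succ_iff.mp h')))
        · have : m = n+1 := le_antisymm h h'
          subst this; exact le_refl _
    have hmemT : ∀ m n : ℕ, m < n → A n ∈ T m := by
      intro m n h
      have h1 := (spec n).1
      rw [if_neg (by omega)] at h1
      exact hchain m (n-1) (by omega) h1
    have hAmono : StrictMono A := by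
      refine strictMono_nat_of_lt_succ (fun n => ?_)
      exact (spec n).2.2.1 _ (hmemT n (n+1) (Nat.lt_succ_self n))
    have hAS : ∀ n, A n ∈ S := by
      intro n
      cases n with
      | zero => have := (spec 0).1; simpa using this
      | succ n =>
        have h0 : T 0 ⊆ S := by have := (spec 0).2.1; simpa using this
        exact h0 (hchain 0 n (Nat.zero_le _) (hmemT n (n+1) (Nat.lt_succ_self n)))
    obtain ⟨k, hk⟩ := Finite.exists_infinite_fiber col
    have hIinf : (col ⁻¹' {k}).Infinite := Set.infinite_coe_iff.mp hk
    refine ⟨A '' (col ⁻¹' {k}), ?_, hIinf.image (hAmono.injective.injOn), k, ?_⟩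
    · rintro b ⟨m, _, rfl⟩; exact hAS m
    · intro u hu humem
      obtain ⟨m, hmI, hm0⟩ := humem 0
      have htail : ∀ i : Fin n, u i.succ ∈ T m := by
        intro i
        obtain ⟨m', _, hm'⟩ := humem i.succ
        have : A m < A m' := by
          rw [hm0, hm']; exact hu (Fin.succ_pos i)
        rw [← hm']
        exact hmemT m m' (hAmono.lt_iff_lt.mp this)
      have hutail : StrictMono (Fin.tail u) := fun i j h => hu (Fin.succ_lt_succ_iff.mpr h)
      have := (spec m).2.2.2 (Fin.tail u) hutail htail
      rw [hm0, Fin.cons_self_tail] at this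
      rw [this]
      exact hmI

section Aux

lemma finmk_eq {n a b : ℕ} (h : a < n) (h' : b < n) (e : a = b) :
    (⟨a, h⟩ : Fin n) = ⟨b, h'⟩ := by subst e; rfl

/-- Flatten a plegma family into a single tuple of length `l*k`. -/
def flatten (l k : ℕ) (hl : 0 < l) (s : Fin l → Fin k → ℕ) (p : Fin (l * k)) : ℕ :=
  s ⟨(p : ℕ) % l, Nat.mod_lt _ hl⟩
    ⟨(p : ℕ) / l, by
      rw [Nat.div_lt_iff_lt_mul hl, Nat.mul_comm k l]; exact p.2⟩

lemma flatten_strictMono {l k : ℕ} (hl : 0 < l) {s : Fin l → Fin k → ℕ}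
    (hs : IsStrictPlegma l k s) : StrictMono (flatten l k hl s) := by
  intro p q hpq
  unfold flatten
  have hple : (p : ℕ) / l ≤ (q : ℕ) / l := Nat.div_le_div_right (le_of_lt hpq)
  rcases lt_or_eq_of_le hple with h | h
  · exact hs.1 _ _ _ _ (Fin.mk_lt_mk.mpr h)
  · have hp := Nat.div_add_mod (p : ℕ) l
    have hq := Nat.div_add_mod (q : ℕ) l
    have hmod : (p : ℕ) % l < (q : ℕ) % l := by
      have hpq' : (p : ℕ) < (q : ℕ) := hpq
      rw [h] at hp
      omega
    have h1 := hs.2 ⟨(p : ℕ) % l, Nat.mod_lt _ hl⟩ ⟨(q : ℕ) % l, Nat.mod_lt _ hl⟩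
      (Fin.mk_lt_mk.mpr hmod)
      ⟨(p : ℕ) / l, by
      rw [Nat.div_lt_iff_lt_mul hl, Nat.mul_comm k l]; exact p.2⟩
    exact lt_of_lt_of_eq h1 (congrArg _ (finmk_eq _ _ h))

lemma index_lt {l k : ℕ} (i : Fin l) (j : Fin k) : l * (j : ℕ) + (i : ℕ) < l * k := by
  calc l * (j : ℕ) + (i : ℕ) < l * (j : ℕ) + l := by omega
  _ = l * ((j : ℕ) + 1) := by ring
  _ ≤ l * k := Nat.mul_le_mul_left l j.2

lemma flatten_apply {l k : ℕ} (hl : 0 < l) (s : Fin l → Fin k → ℕ) (i : Fin l) (j : Fin k) :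
    flatten l k hl s ⟨l * (j : ℕ) + (i : ℕ), index_lt i j⟩ = s i j := by
  unfold flatten
  have h1 : (l * (j : ℕ) + (i : ℕ)) % l = (i : ℕ) := by
    rw [Nat.mul_add_mod]; exact Nat.mod_eq_of_lt i.2
  have h2 : (l * (j : ℕ) + (i : ℕ)) / l = (j : ℕ) := by
    rw [Nat.mul_add_div hl, Nat.div_eq_of_lt i.2]
    omega
  exact congr (congrArg s (finmk_eq _ _ h1 |>.trans (Fin.eta i i.2)))
    ((finmk_eq _ _ h2).trans (Fin.eta j j.2))

lemma plegma_min {l k : ℕ} (hl : 0 < l) (hk : 0 < k) {s : Fin l → Fin k → ℕ}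
    (hs : IsStrictPlegma l k s) (i : Fin l) (j : Fin k) :
    s ⟨0, hl⟩ ⟨0, hk⟩ ≤ s i j := by
  rcases Nat.eq_zero_or_pos (j : ℕ) with hj | hj
  · have hj' : j = ⟨0, hk⟩ := Fin.ext (by simp [hj])
    rcases Nat.eq_zero_or_pos (i : ℕ) with hi | hi
    · have hi' : i = ⟨0, hl⟩ := Fin.ext (by simp [hi])
      rw [hi', hj']
    · rw [hj']
      exact (hs.2 ⟨0, hl⟩ i (by simp [Fin.lt_def, hi]) _).le
  · exact (hs.1 ⟨0, hl⟩ i ⟨0, hk⟩ j (by simp [Fin.lt_def, hj])).le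

lemma floor_close {x y η : ℝ} (hx : 0 ≤ x) (hy : 0 ≤ y) (hη : 0 < η)
    (h : ⌊x / η⌋₊ = ⌊y / η⌋₊) : |x - y| < η := by
  have h1 : (⌊x / η⌋₊ : ℝ) ≤ x / η := Nat.floor_le (div_nonneg hx hη.le)
  have h2 : x / η < ⌊x / η⌋₊ + 1 := Nat.lt_floor_add_one _
  have h3 : (⌊y / η⌋₊ : ℝ) ≤ y / η := Nat.floor_le (div_nonneg hy hη.le)
  have h4 : y / η < ⌊y / η⌋₊ + 1 := Nat.lt_floor_add_one _
  rw [h] at h1 h2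
  rw [abs_sub_lt_iff]
  constructor
  · have := (div_lt_iff₀ hη).mp h2
    have := (le_div_iff₀ hη).mp h3
    nlinarith
  · have := (div_lt_iff₀ hη).mp h4
    have := (le_div_iff₀ hη).mp h1
    nlinarith

lemma norm_comb_le {X : Type*} [NormedAddCommGroup X] [NormedSpace ℝ X]
    {l k : ℕ} (x : Fin l → ℕ → X) {C r : ℝ} (hC : ∀ i n, ‖x i n‖ ≤ C)
    (hr : 0 ≤ r) (a : Fin l → Fin k → ℝ) (ha : ∀ i j, |a i j| ≤ r)
    (s : Fin l → Fin k → ℕ) :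
    ‖∑ j, ∑ i, a i j • x i (s i j)‖ ≤ (k * l) * (r * C) := by
  calc ‖∑ j, ∑ i, a i j • x i (s i j)‖
      ≤ ∑ j : Fin k, ‖∑ i, a i j • x i (s i j)‖ := norm_sum_le _ _
    _ ≤ ∑ j : Fin k, ∑ i : Fin l, ‖a i j • x i (s i j)‖ :=
        Finset.sum_le_sum fun j _ => norm_sum_le _ _
    _ ≤ ∑ _j : Fin k, ∑ _i : Fin l, r * C := by
        refine Finset.sum_le_sum fun j _ => Finset.sum_le_sum fun i _ => ?_
        rw [norm_smul, Real.norm_eq_abs]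
        exact mul_le_mul (ha i j) (hC i (s i j)) (norm_nonneg _) hr
    _ = (k * l) * (r * C) := by
        simp [Finset.sum_const, Finset.card_univ, nsmul_eq_mul]
        ring

end Aux

section Aux2

variable {X : Type*} [NormedAddCommGroup X] [NormedSpace ℝ X]

/-- Unflatten a tuple of length `l*k` into an `l × k` array. -/
def unflatten (l k : ℕ) (u : Fin (l * k) → ℕ) (i : Fin l) (j : Fin k) : ℕ :=
  u ⟨l * (j : ℕ) + (i : ℕ), index_lt i j⟩

lemma unflatten_flatten {l k : ℕ} (hl : 0 < l) (s : Fin l → Fin k → ℕ) :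
    unflatten l k (flatten l k hl s) = s :=
  funext fun i => funext fun j => flatten_apply hl s i j

/-- The net point in `[-1,1]` indexed by `q`. -/
noncomputable def netPt (mK : ℕ) {l k : ℕ} (q : Fin l → Fin k → Fin (mK + 1))
    (i : Fin l) (j : Fin k) : ℝ :=
  -1 + (q i j : ℝ) * (2 / mK)

lemma netPt_abs_le {mK l k : ℕ} (hm : 1 ≤ mK) (q : Fin l → Fin k → Fin (mK + 1))
    (i : Fin l) (j : Fin k) : |netPt mK q i j| ≤ 1 := by
  have hmp : (0 : ℝ) < mK := by exact_mod_cast hm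
  have h1 : ((q i j : ℕ) : ℝ) ≤ mK := by exact_mod_cast Fin.is_le (q i j)
  have h2 : (0 : ℝ) ≤ ((q i j : ℕ) : ℝ) := Nat.cast_nonneg _
  have h3 : (0 : ℝ) < 2 / mK := by positivity
  have h4 : ((q i j : ℕ) : ℝ) * (2 / mK) ≤ (mK : ℝ) * (2 / mK) :=
    mul_le_mul_of_nonneg_right h1 h3.le
  have h5 : (mK : ℝ) * (2 / mK) = 2 := by field_simp
  unfold netPt
  rw [abs_le]
  constructor <;> nlinarith
  
/-- The coloring used for the Ramsey argument. -/
noncomputable def colorOf (l k mK DK : ℕ) (ηK : ℝ) (x : Fin l → ℕ → X)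
    (u : Fin (l * k) → ℕ) (q : Fin l → Fin k → Fin (mK + 1)) : Fin (DK + 1) :=
  ⟨min ⌊‖∑ j, ∑ i, netPt mK q i j • x i (unflatten l k u i j)‖ / ηK⌋₊ DK,
    Nat.lt_succ_of_le (min_le_right _ _)⟩

lemma min_floor_eq {a b η : ℝ} {D : ℕ} (hη : 0 < η) (ha : 0 ≤ a) (hb : 0 ≤ b)
    (haD : a < η * D) (hbD : b < η * D)
    (h : min ⌊a / η⌋₊ D = min ⌊b / η⌋₊ D) : |a - b| < η := by
  have h1 : ⌊a / η⌋₊ < D := by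
    rw [Nat.floor_lt (by positivity), div_lt_iff₀ hη]
    linarith
  have h2 : ⌊b / η⌋₊ < D := by
    rw [Nat.floor_lt (by positivity), div_lt_iff₀ hη]
    linarith
  rw [min_eq_left h1.le, min_eq_left h2.le] at h
  exact floor_close ha hb hη h

lemma norm_comb_diff_le {l k : ℕ} (x : Fin l → ℕ → X) {C e : ℝ}
    (hC : ∀ i n, ‖x i n‖ ≤ C) (he : 0 ≤ e) (a a' : Fin l → Fin k → ℝ)
    (haa' : ∀ i j, |a i j - a' i j| ≤ e) (s : Fin l → Fin k → ℕ) :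
    ‖(∑ j, ∑ i, a i j • x i (s i j)) - ∑ j, ∑ i, a' i j • x i (s i j)‖
      ≤ (k * l) * (e * C) := by
  have h2 : (∑ j, ∑ i, a i j • x i (s i j)) - ∑ j, ∑ i, a' i j • x i (s i j)
      = ∑ j, ∑ i, (a i j - a' i j) • x i (s i j) := by
    rw [← Finset.sum_sub_distrib]
    refine Finset.sum_congr rfl fun j _ => ?_
    rw [← Finset.sum_sub_distrib]
    refine Finset.sum_congr rfl fun i _ => ?_
    rw [sub_smul]
  rw [h2]
  exact norm_comb_le x hC he _ haa' s

end Aux2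


/-- Given bounded sequences `(x i)_{i<l}` in a Banach space and a decreasing
null sequence `(δ n)` of positive reals, every infinite `M ⊆ ℕ` has an infinite subset
`L ⊆ M` (enumerated by a strictly increasing `φ`) such that for every `k`, all scalars in
`[-1,1]` and all strict plegma families `s, t` in `[L]^k` with `s 1 1, t 1 1 ≥ L(k)`, the
norms of the corresponding combinations differ by less than `δ k`. -/
theorem statement8 {X : Type*} [NormedAddCommGroup X] [NormedSpace ℝ X] [CompleteSpace X]
    (l : ℕ) (hl : 0 < l) (x : Fin l → ℕ → X)
    (hbdd : ∀ i : Fin l, ∃ C : ℝ, ∀ n, ‖x i n‖ ≤ C)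
    (δ : ℕ → ℝ) (hδpos : ∀ n, 0 < δ n) (hδanti : Antitone δ)
    (hδ0 : Tendsto δ atTop (nhds 0))
    (M : Set ℕ) (hM : M.Infinite) :
    ∃ φ : ℕ → ℕ, StrictMono φ ∧ (∀ n, φ n ∈ M) ∧
      ∀ (k : ℕ) (hk : 0 < k) (a : Fin l → Fin k → ℝ), (∀ i j, |a i j| ≤ 1) →
        ∀ s t : Fin l → Fin k → ℕ, IsStrictPlegma l k s → IsStrictPlegma l k t →
          (∀ i j, s i j ∈ Set.range φ) → (∀ i j, t i j ∈ Set.range φ) →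
          φ (k - 1) ≤ s ⟨0, hl⟩ ⟨0, hk⟩ → φ (k - 1) ≤ t ⟨0, hl⟩ ⟨0, hk⟩ →
          |‖∑ j, ∑ i, a i j • x i (s i j)‖ - ‖∑ j, ∑ i, a i j • x i (t i j)‖| < δ k := by
  classical
  choose C0 hC0 using hbdd
  set C : ℝ := 1 + ∑ i, |C0 i| with hCdef
  have hsumnn : (0:ℝ) ≤ ∑ i, |C0 i| := Finset.sum_nonneg fun i _ => abs_nonneg _
  have hC1 : (1:ℝ) ≤ C := le_add_of_nonneg_right hsumnn
  have hCpos : (0:ℝ) < C := lt_of_lt_of_le one_pos hC1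
  have hxC : ∀ i n, ‖x i n‖ ≤ C := by
    intro i n
    refine (hC0 i n).trans ?_
    calc C0 i ≤ |C0 i| := le_abs_self _
      _ ≤ ∑ i', |C0 i'| := Finset.single_le_sum (f := fun i' => |C0 i'|) (fun i' _ => abs_nonneg _) (Finset.mem_univ i)
      _ ≤ C := by rw [hCdef]; linarith
  -- net granularity, norm discretization count, norm tolerance, per level k
  set mf : ℕ → ℕ := fun k => max 1 ⌈(16 * (k : ℝ) * l * C) / δ k⌉₊ with hmfdef
  have hmf1 : ∀ k, 1 ≤ mf k := fun k => le_max_left _ _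
  have hmfpos : ∀ k, (0:ℝ) < mf k := fun k => by exact_mod_cast hmf1 k
  set ηf : ℕ → ℝ := fun k => δ k / 2 with hηdef
  have hηpos : ∀ k, 0 < ηf k := fun k => half_pos (hδpos k)
  set Df : ℕ → ℕ := fun k => ⌈((k : ℝ) * l * C) / ηf k⌉₊ + 1 with hDdef
  -- Ramsey step
  have hstep : ∀ (k : ℕ) (S : Set ℕ), S.Infinite → ∃ T, T ⊆ S ∧ T.Infinite ∧
      ∀ u v : Fin (l * k) → ℕ, StrictMono u → StrictMono v →
        (∀ p, u p ∈ T) → (∀ p, v p ∈ T) →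
        colorOf l k (mf k) (Df k) (ηf k) x u = colorOf l k (mf k) (Df k) (ηf k) x v := by
    intro k S hS
    obtain ⟨T, h1, h2, kk, h3⟩ := ramsey_infinite (l * k)
      (colorOf l k (mf k) (Df k) (ηf k) x) hS
    exact ⟨T, h1, h2, fun u v hu hv hut hvt => (h3 u hu hut).trans (h3 v hv hvt).symm⟩
  let Wstep : (k : ℕ) → {T : Set ℕ // T.Infinite} → {T : Set ℕ // T.Infinite} :=
    fun k W' => ⟨(hstep (k+1) (W' : Set ℕ) W'.2).choose, (hstep (k+1) (W' : Set ℕ) W'.2).choose_spec.2.1⟩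
  let W : ℕ → {T : Set ℕ // T.Infinite} := fun k => Nat.rec ⟨M, hM⟩ Wstep k
  have Wspec : ∀ k : ℕ, ((W (k+1)).1) ⊆ (W k).1 ∧
      ∀ u v : Fin (l * (k+1)) → ℕ, StrictMono u → StrictMono v →
        (∀ p, u p ∈ (W (k+1)).1) → (∀ p, v p ∈ (W (k+1)).1) →
        colorOf l (k+1) (mf (k+1)) (Df (k+1)) (ηf (k+1)) x u
          = colorOf l (k+1) (mf (k+1)) (Df (k+1)) (ηf (k+1)) x v := by
    intro k
    have h := (hstep (k+1) (W k).1 (W k).2).choose_spec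
    exact ⟨h.1, h.2.2⟩
  have Wchain : ∀ k k' : ℕ, k ≤ k' → (W k').1 ⊆ (W k).1 := by
    intro k k' h
    induction k' with
    | zero =>
      have : k = 0 := Nat.le_zero.mp h
      subst this; exact Set.Subset.rfl
    | succ n IH =>
      rcases Nat.lt_or_ge k (n+1) with h' | h'
      · exact ((Wspec n).1).trans (IH (Nat.lt_succ_iff.mp h'))
      · have : k = n+1 := le_antisymm h h'
        subst this; exact Set.Subset.rfl
  -- the diagonal sequence φ
  have hφex : ∀ (n : ℕ) (b : ℕ), ∃ a, a ∈ (W n).1 ∧ b < a := by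
    intro n b
    obtain ⟨a, ha, hba⟩ := (W n).2.exists_gt b
    exact ⟨a, ha, hba⟩
  let φ : ℕ → ℕ := fun n => Nat.rec (hφex 1 0).choose (fun n p => (hφex (n+2) p).choose) n
  have hφ0 : φ 0 ∈ (W 1).1 := (hφex 1 0).choose_spec.1
  have hφs : ∀ n, φ (n+1) ∈ (W (n+2)).1 ∧ φ n < φ (n+1) :=
    fun n => (hφex (n+2) (φ n)).choose_spec
  have hφmem : ∀ n, φ n ∈ (W (n+1)).1 := by
    intro n
    cases n with
    | zero => exact hφ0
    | succ n => exact (hφs n).1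
  have hφmono : StrictMono φ := strictMono_nat_of_lt_succ fun n => (hφs n).2
  have hφM : ∀ n, φ n ∈ M := fun n => Wchain 0 (n+1) (Nat.zero_le _) (hφmem n)
  refine ⟨φ, hφmono, hφM, ?_⟩
  intro k hk a ha s t hs ht hsr htr hs0 ht0
  obtain ⟨k', rfl⟩ : ∃ k', k = k' + 1 := ⟨k - 1, (Nat.succ_pred_eq_of_pos hk).symm⟩
  -- all values of s, t lie in W (k'+1)
  have key : ∀ (s : Fin l → Fin (k'+1) → ℕ), IsStrictPlegma l (k'+1) s →
      (∀ i j, s i j ∈ Set.range φ) → φ ((k'+1) - 1) ≤ s ⟨0, hl⟩ ⟨0, hk⟩ →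
      ∀ i j, s i j ∈ (W (k'+1)).1 := by
    intro s hsp hr h0 i j
    obtain ⟨n, hn⟩ := hr i j
    have hmin : s ⟨0, hl⟩ ⟨0, hk⟩ ≤ s i j := plegma_min hl hk hsp i j
    have h1 : φ k' ≤ φ n := by
      rw [hn]
      simpa using le_trans h0 hmin
    have hkn : k' ≤ n := hφmono.le_iff_le.mp h1
    rw [← hn]
    exact Wchain (k'+1) (n+1) (by omega) (hφmem n)
  have hcol : colorOf l (k'+1) (mf (k'+1)) (Df (k'+1)) (ηf (k'+1)) x (flatten l (k'+1) hl s)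
      = colorOf l (k'+1) (mf (k'+1)) (Df (k'+1)) (ηf (k'+1)) x (flatten l (k'+1) hl t) :=
    (Wspec k').2 _ _ (flatten_strictMono hl hs) (flatten_strictMono hl ht)
      (fun p => key s hs hsr hs0 _ _) (fun p => key t ht htr ht0 _ _)
  -- round the scalars to a net point
  have hmp : (0:ℝ) < mf (k'+1) := hmfpos _
  have hqlt : ∀ i (j : Fin (k'+1)),
      ⌊(a i j + 1) * ((mf (k'+1) : ℝ) / 2)⌋₊ < mf (k'+1) + 1 := by
    intro i j
    refine Nat.lt_succ_of_le ?_
    obtain ⟨hal, har⟩ := abs_le.mp (ha i j)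
    have h1 : (a i j + 1) * ((mf (k'+1) : ℝ) / 2) ≤ (mf (k'+1) : ℝ) := by nlinarith
    calc ⌊(a i j + 1) * ((mf (k'+1) : ℝ) / 2)⌋₊ ≤ ⌊(mf (k'+1) : ℝ)⌋₊ :=
          Nat.floor_le_floor h1
      _ = mf (k'+1) := Nat.floor_natCast _
  set q : Fin l → Fin (k'+1) → Fin (mf (k'+1) + 1) :=
    fun i j => ⟨⌊(a i j + 1) * ((mf (k'+1) : ℝ) / 2)⌋₊, hqlt i j⟩ with hqdef
  have herr : ∀ i j, |a i j - netPt (mf (k'+1)) q i j| ≤ 2 / mf (k'+1) := by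
    intro i j
    obtain ⟨hal, har⟩ := abs_le.mp (ha i j)
    set t0 : ℝ := (a i j + 1) * ((mf (k'+1) : ℝ) / 2) with ht0
    have ht0nn : 0 ≤ t0 := by rw [ht0]; nlinarith
    have hfl : (⌊t0⌋₊ : ℝ) ≤ t0 := Nat.floor_le ht0nn
    have hfl2 : t0 < ⌊t0⌋₊ + 1 := Nat.lt_floor_add_one _
    have hexp : a i j - netPt (mf (k'+1)) q i j = (t0 - ⌊t0⌋₊) * (2 / mf (k'+1)) := by
      unfold netPt
      rw [hqdef]
      simp only [ht0]
      field_simp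
      ring
    rw [hexp, abs_mul, abs_of_nonneg (by linarith), abs_of_nonneg (by positivity)]
    have h1 : t0 - ⌊t0⌋₊ ≤ 1 := by linarith
    have h2 : (0:ℝ) < 2 / mf (k'+1) := by positivity
    nlinarith
  -- homogeneity at the net point: norms are η-close
  have hflq : min ⌊‖∑ j, ∑ i, netPt (mf (k'+1)) q i j • x i (s i j)‖ / ηf (k'+1)⌋₊ (Df (k'+1))
      = min ⌊‖∑ j, ∑ i, netPt (mf (k'+1)) q i j • x i (t i j)‖ / ηf (k'+1)⌋₊ (Df (k'+1)) := by
    have h := congrArg Fin.val (congrFun hcol q)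
    simpa [colorOf, unflatten_flatten hl] using h
  have hVsb : ‖∑ j, ∑ i, netPt (mf (k'+1)) q i j • x i (s i j)‖ ≤ ((k'+1 : ℕ) * l) * (1 * C) :=
    norm_comb_le x hxC zero_le_one _ (fun i j => netPt_abs_le (hmf1 _) q i j) s
  have hVtb : ‖∑ j, ∑ i, netPt (mf (k'+1)) q i j • x i (t i j)‖ ≤ ((k'+1 : ℕ) * l) * (1 * C) :=
    norm_comb_le x hxC zero_le_one _ (fun i j => netPt_abs_le (hmf1 _) q i j) t
  have hltD : (((k'+1 : ℕ) : ℝ) * l) * (1 * C) < ηf (k'+1) * Df (k'+1) := by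
    have hc := Nat.le_ceil ((((k'+1 : ℕ) : ℝ) * l * C) / ηf (k'+1))
    have hD : (Df (k'+1) : ℝ) = ⌈(((k'+1 : ℕ) : ℝ) * l * C) / ηf (k'+1)⌉₊ + 1 := by
      rw [hDdef]; push_cast; ring
    have hη := hηpos (k'+1)
    rw [div_le_iff₀ hη] at hc
    calc (((k'+1 : ℕ) : ℝ) * l) * (1 * C) = ((k'+1 : ℕ) : ℝ) * l * C := by ring
      _ ≤ (⌈(((k'+1 : ℕ) : ℝ) * l * C) / ηf (k'+1)⌉₊ : ℝ) * ηf (k'+1) := hc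
      _ < ((⌈(((k'+1 : ℕ) : ℝ) * l * C) / ηf (k'+1)⌉₊ : ℝ) + 1) * ηf (k'+1) := by linarith
      _ = ηf (k'+1) * (Df (k'+1) : ℝ) := by rw [hD]; ring
  have hmid : |‖∑ j, ∑ i, netPt (mf (k'+1)) q i j • x i (s i j)‖
      - ‖∑ j, ∑ i, netPt (mf (k'+1)) q i j • x i (t i j)‖| < ηf (k'+1) :=
    min_floor_eq (hηpos _) (norm_nonneg _) (norm_nonneg _)
      (lt_of_le_of_lt hVsb hltD) (lt_of_le_of_lt hVtb hltD) hflq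
  -- error terms
  have hds : ‖(∑ j, ∑ i, a i j • x i (s i j))
      - ∑ j, ∑ i, netPt (mf (k'+1)) q i j • x i (s i j)‖
      ≤ ((k'+1 : ℕ) * l) * ((2 / mf (k'+1)) * C) :=
    norm_comb_diff_le x hxC (by positivity) _ _ herr s
  have hdt : ‖(∑ j, ∑ i, a i j • x i (t i j))
      - ∑ j, ∑ i, netPt (mf (k'+1)) q i j • x i (t i j)‖
      ≤ ((k'+1 : ℕ) * l) * ((2 / mf (k'+1)) * C) :=
    norm_comb_diff_le x hxC (by positivity) _ _ herr t
  -- the denominator is large enough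
  have hmge : (16 * ((k'+1 : ℕ) : ℝ) * l * C) / δ (k'+1) ≤ mf (k'+1) := by
    calc (16 * ((k'+1 : ℕ) : ℝ) * l * C) / δ (k'+1)
        ≤ (⌈(16 * ((k'+1 : ℕ) : ℝ) * l * C) / δ (k'+1)⌉₊ : ℝ) := Nat.le_ceil _
      _ ≤ mf (k'+1) := by
          rw [hmfdef]
          exact_mod_cast Nat.cast_le.mpr (le_max_right _ _)
  have hl1 : (1:ℝ) ≤ l := by exact_mod_cast hl
  have hk1 : (1:ℝ) ≤ ((k'+1 : ℕ) : ℝ) := by exact_mod_cast hk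
  have herrb : (((k'+1 : ℕ) : ℝ) * l) * ((2 / mf (k'+1)) * C) ≤ δ (k'+1) / 8 := by
    have hδp := hδpos (k'+1)
    rw [div_le_iff₀ hδp] at hmge
    have hKL : (0:ℝ) < ((k'+1 : ℕ) : ℝ) * l * C := by positivity
    rw [show (((k'+1 : ℕ) : ℝ) * l) * ((2 / mf (k'+1)) * C)
        = (2 * (((k'+1 : ℕ) : ℝ) * l * C)) / mf (k'+1) by ring,
      div_le_div_iff₀ hmp (by norm_num : (0:ℝ) < 8)]
    nlinarith
  -- final combination
  have t1 := abs_norm_sub_norm_le (∑ j, ∑ i, a i j • x i (s i j))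
    (∑ j, ∑ i, netPt (mf (k'+1)) q i j • x i (s i j))
  have t2 := abs_norm_sub_norm_le (∑ j, ∑ i, a i j • x i (t i j))
    (∑ j, ∑ i, netPt (mf (k'+1)) q i j • x i (t i j))
  have h1 := t1.trans hds
  have h2 := t2.trans hdt
  have h2' : |‖∑ j, ∑ i, netPt (mf (k'+1)) q i j • x i (t i j)‖
      - ‖∑ j, ∑ i, a i j • x i (t i j)‖| ≤ (((k'+1 : ℕ) : ℝ) * l) * ((2 / mf (k'+1)) * C) := by
    rw [abs_sub_comm]; exact h2
  have h4 := abs_sub_le ‖∑ j, ∑ i, a i j • x i (s i j)‖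
    ‖∑ j, ∑ i, netPt (mf (k'+1)) q i j • x i (s i j)‖ ‖∑ j, ∑ i, a i j • x i (t i j)‖
  have h5 := abs_sub_le ‖∑ j, ∑ i, netPt (mf (k'+1)) q i j • x i (s i j)‖
    ‖∑ j, ∑ i, netPt (mf (k'+1)) q i j • x i (t i j)‖ ‖∑ j, ∑ i, a i j • x i (t i j)‖
  have hη2 : ηf (k'+1) = δ (k'+1) / 2 := rfl
  have hδp := hδpos (k'+1)
  linarith [h1, h2', hmid, herrb, h4, h5]
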